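/- For any real a > 0 and Ω > 0, the improper integral ∫₀^∞ (1/2)·ln( (Ω² − ω²)² / ((Ω² − ω²)² + a²·ω²) ) dω converges and equals −π·a/2. Equivalently, the sensitivity function S(s) = (s² + Ω²)/(s² + a·s + Ω²) obtained by proportional feedback on the undamped oscillator satisfies ∫₀^∞ ln |S(iω)| dω = −π·a/2. -/

import Mathlib

open MeasureTheory Filter Set Topology

lemma bode_aux_A (u v : ℝ) :
    Tendsto (fun ω : ℝ => ω * Real.log (1 + u/ω + v/ω^2)) atTop (𝓝 u) := by
  have h1 : HasDerivAt (fun t : ℝ => 1 + u*t + v*t^2) u 0 := by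
    have := (((hasDerivAt_id (0:ℝ)).const_mul u).const_add 1).add
      (((hasDerivAt_pow 2 (0:ℝ))).const_mul v)
    simpa [Pi.add_def] using this
  have h2 : HasDerivAt (fun t : ℝ => Real.log (1 + u*t + v*t^2)) u 0 := by
    have := h1.log (by norm_num)
    simpa using this
  rw [hasDerivAt_iff_tendsto_slope] at h2
  have hq : Tendsto (fun ω : ℝ => ω⁻¹) atTop (𝓝[≠] (0:ℝ)) := by
    apply tendsto_nhdsWithin_of_tendsto_nhds_of_eventually_within _ tendsto_inv_atTop_zero
    filter_upwards [eventually_gt_atTop (0:ℝ)] with ω hω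
    exact (inv_ne_zero (ne_of_gt hω))
  have h3 := h2.comp hq
  apply h3.congr'
  filter_upwards [eventually_gt_atTop (0:ℝ)] with ω hω
  have hω0 : ω ≠ 0 := ne_of_gt hω
  simp only [Function.comp, slope_def_field]
  rw [show (1:ℝ) + u*0 + v*0^2 = 1 by ring, Real.log_one]
  rw [show (1:ℝ) + u*ω⁻¹ + v*(ω⁻¹)^2 = 1 + u/ω + v/ω^2 by
    field_simp]
  field_simp
  ring


lemma bode_aux_B (b c : ℝ) (hc : 0 < c) :
    Tendsto (fun ω : ℝ => Real.arctan ((ω + b)/c)) atTop (𝓝 (Real.pi/2)) := by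
  have h1 : Tendsto (fun ω : ℝ => (ω + b)/c) atTop atTop :=
    (tendsto_atTop_add_const_right _ b tendsto_id).atTop_div_const hc
  exact (Real.tendsto_arctan_atTop.mono_right nhdsWithin_le_nhds).comp h1

lemma bode_aux_C (b c : ℝ) :
    Tendsto (fun ω : ℝ => (1/2)*(ω+b)*(Real.log ((ω+b)^2+c^2) - Real.log (ω^2)))
      atTop (𝓝 b) := by
  have hA := bode_aux_A (2*b) (b^2+c^2)
  have hA2 : Tendsto (fun ω : ℝ => Real.log (1 + 2*b/ω + (b^2+c^2)/ω^2)) atTop (𝓝 0) := by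
    have h := tendsto_inv_atTop_zero.mul hA
    rw [zero_mul] at h
    apply h.congr'
    filter_upwards [eventually_gt_atTop (0:ℝ)] with ω hω
    field_simp
  have h := (hA.const_mul (1/2 : ℝ)).add (hA2.const_mul (b/2))
  have hval : (1/2 : ℝ) * (2*b) + (b/2) * 0 = b := by ring
  rw [hval] at h
  apply h.congr'
  filter_upwards [eventually_gt_atTop (|b| + |c| + 1)] with ω hω
  have hω0 : 0 < ω := by
    have := abs_nonneg b; have := abs_nonneg c; linarith
  have hωb : 0 < ω + b := by
    have := neg_abs_le b; have := abs_nonneg c; linarith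
  have hnum : ((ω+b)^2 + c^2 : ℝ) ≠ 0 := by positivity
  have hden : (ω^2 : ℝ) ≠ 0 := by positivity
  have hE : (1 : ℝ) + 2*b/ω + (b^2+c^2)/ω^2 = ((ω+b)^2 + c^2)/ω^2 := by
    field_simp; ring
  rw [hE, Real.log_div hnum hden]
  ring

lemma bode_deriv (a Ω τ c₁ c₂ : ℝ) (hΩ : 0 < Ω) (hc₁ : 0 < c₁) (hc₂ : 0 < c₂)
    (hD : ∀ ω : ℝ, ((ω-τ)^2+c₁^2)*((ω+τ)^2+c₂^2) = (Ω^2-ω^2)^2 + a^2*ω^2)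
    (ω : ℝ) (hω : 0 < ω) (hne : ω ≠ Ω) :
    HasDerivAt (fun ω : ℝ =>
      (ω-Ω)*Real.log (ω-Ω) + (ω+Ω)*Real.log (ω+Ω)
      - ((1/2)*(ω-τ)*Real.log ((ω-τ)^2+c₁^2) + c₁ * Real.arctan ((ω-τ)/c₁))
      - ((1/2)*(ω+τ)*Real.log ((ω+τ)^2+c₂^2) + c₂ * Real.arctan ((ω+τ)/c₂)))
      ((1/2) * Real.log ((Ω^2-ω^2)^2 / ((Ω^2-ω^2)^2 + a^2*ω^2))) ω := by
  have hm : ω - Ω ≠ 0 := sub_ne_zero.mpr hne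
  have hp : (0:ℝ) < ω + Ω := by linarith
  have hp' : ω + Ω ≠ 0 := ne_of_gt hp
  have hP₁ : (0:ℝ) < (ω-τ)^2 + c₁^2 := by positivity
  have hP₂ : (0:ℝ) < (ω+τ)^2 + c₂^2 := by positivity
  -- pieces
  have l1 : HasDerivAt (fun ω : ℝ => ω - Ω) 1 ω := (hasDerivAt_id ω).sub_const Ω
  have l1' : HasDerivAt (fun ω : ℝ => ω + Ω) 1 ω := (hasDerivAt_id ω).add_const Ω
  have t1 : HasDerivAt (fun ω : ℝ => (ω-Ω)*Real.log (ω-Ω)) (Real.log (ω-Ω) + 1) ω := by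
    have hlog : HasDerivAt (fun ω : ℝ => Real.log (ω-Ω)) (1/(ω-Ω)) ω := by
      simpa using l1.log hm
    have := l1.mul hlog
    have e : 1 * Real.log (ω-Ω) + (ω-Ω) * (1/(ω-Ω)) = Real.log (ω-Ω) + 1 := by
      field_simp
    rwa [e] at this
  have t2 : HasDerivAt (fun ω : ℝ => (ω+Ω)*Real.log (ω+Ω)) (Real.log (ω+Ω) + 1) ω := by
    have hlog : HasDerivAt (fun ω : ℝ => Real.log (ω+Ω)) (1/(ω+Ω)) ω := by
      simpa using l1'.log hp'
    have := l1'.mul hlog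
    have e : 1 * Real.log (ω+Ω) + (ω+Ω) * (1/(ω+Ω)) = Real.log (ω+Ω) + 1 := by
      field_simp
    rwa [e] at this
  have t3 : HasDerivAt (fun ω : ℝ =>
      (1/2)*(ω-τ)*Real.log ((ω-τ)^2+c₁^2) + c₁ * Real.arctan ((ω-τ)/c₁))
      ((1/2)*Real.log ((ω-τ)^2+c₁^2) + 1) ω := by
    have lsub : HasDerivAt (fun ω : ℝ => ω - τ) 1 ω := (hasDerivAt_id ω).sub_const τ
    have lP : HasDerivAt (fun ω : ℝ => (ω-τ)^2 + c₁^2) (2*(ω-τ)) ω := by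
      have := (lsub.pow 2).add_const (c₁^2)
      simpa using this
    have llog : HasDerivAt (fun ω : ℝ => Real.log ((ω-τ)^2+c₁^2))
        (2*(ω-τ)/((ω-τ)^2+c₁^2)) ω := lP.log (ne_of_gt hP₁)
    have lc : HasDerivAt (fun ω : ℝ => (1/2)*(ω-τ)) (1/2) ω := by
      simpa using lsub.const_mul (1/2 : ℝ)
    have lmul := lc.mul llog
    have larg : HasDerivAt (fun ω : ℝ => (ω-τ)/c₁) (1/c₁) ω := by
      simpa using lsub.div_const c₁
    have larc : HasDerivAt (fun ω : ℝ => Real.arctan ((ω-τ)/c₁))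
        (1/(1+((ω-τ)/c₁)^2) * (1/c₁)) ω :=
      (Real.hasDerivAt_arctan _).comp ω larg
    have := lmul.add (larc.const_mul c₁)
    refine this.congr_deriv ?_
    have hc₁0 : c₁ ≠ 0 := ne_of_gt hc₁
    field_simp
    ring
  have t4 : HasDerivAt (fun ω : ℝ =>
      (1/2)*(ω+τ)*Real.log ((ω+τ)^2+c₂^2) + c₂ * Real.arctan ((ω+τ)/c₂))
      ((1/2)*Real.log ((ω+τ)^2+c₂^2) + 1) ω := by
    have lsub : HasDerivAt (fun ω : ℝ => ω + τ) 1 ω := (hasDerivAt_id ω).add_const τ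
    have lP : HasDerivAt (fun ω : ℝ => (ω+τ)^2 + c₂^2) (2*(ω+τ)) ω := by
      have := (lsub.pow 2).add_const (c₂^2)
      simpa using this
    have llog : HasDerivAt (fun ω : ℝ => Real.log ((ω+τ)^2+c₂^2))
        (2*(ω+τ)/((ω+τ)^2+c₂^2)) ω := lP.log (ne_of_gt hP₂)
    have lc : HasDerivAt (fun ω : ℝ => (1/2)*(ω+τ)) (1/2) ω := by
      simpa using lsub.const_mul (1/2 : ℝ)
    have lmul := lc.mul llog
    have larg : HasDerivAt (fun ω : ℝ => (ω+τ)/c₂) (1/c₂) ω := by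
      simpa using lsub.div_const c₂
    have larc : HasDerivAt (fun ω : ℝ => Real.arctan ((ω+τ)/c₂))
        (1/(1+((ω+τ)/c₂)^2) * (1/c₂)) ω :=
      (Real.hasDerivAt_arctan _).comp ω larg
    have := lmul.add (larc.const_mul c₂)
    refine this.congr_deriv ?_
    have hc₂0 : c₂ ≠ 0 := ne_of_gt hc₂
    field_simp
    ring
  have total := ((t1.add t2).sub t3).sub t4
  refine total.congr_deriv ?_
  -- value identity
  have hN : ((Ω^2 - ω^2)^2 : ℝ) ≠ 0 := by
    have : Ω^2 - ω^2 ≠ 0 := by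
      intro h
      have : (Ω - ω) * (Ω + ω) = 0 := by linear_combination h
      rcases mul_eq_zero.mp this with h' | h'
      · exact hne (by linarith)
      · linarith
    positivity
  have hDpos : (0:ℝ) < (Ω^2-ω^2)^2 + a^2*ω^2 := by
    rw [← hD ω]; positivity
  rw [Real.log_div hN (ne_of_gt hDpos)]
  have e1 : Real.log ((Ω^2-ω^2)^2) = 2 * Real.log (ω-Ω) + 2 * Real.log (ω+Ω) := by
    rw [Real.log_pow]
    rw [show (Ω^2 - ω^2 : ℝ) = -((ω-Ω)*(ω+Ω)) by ring, Real.log_neg_eq_log,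
      Real.log_mul hm hp']
    push_cast; ring
  have e2 : Real.log ((Ω^2-ω^2)^2 + a^2*ω^2)
      = Real.log ((ω-τ)^2+c₁^2) + Real.log ((ω+τ)^2+c₂^2) := by
    rw [← hD ω, Real.log_mul (ne_of_gt hP₁) (ne_of_gt hP₂)]
  rw [e1, e2]
  ring
theorem bode_integral_undamped_oscillator (a Ω : ℝ) (ha : 0 < a) (hΩ : 0 < Ω) :
    IntegrableOn
      (fun ω : ℝ => (1 / 2) * Real.log
        ((Ω ^ 2 - ω ^ 2) ^ 2 / ((Ω ^ 2 - ω ^ 2) ^ 2 + a ^ 2 * ω ^ 2))) (Set.Ioi 0) ∧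
    ∫ ω in Set.Ioi (0 : ℝ), (1 / 2) * Real.log
        ((Ω ^ 2 - ω ^ 2) ^ 2 / ((Ω ^ 2 - ω ^ 2) ^ 2 + a ^ 2 * ω ^ 2)) =
      -(Real.pi * a / 2) := by
  -- roots of s² + a s + Ω²
  obtain ⟨c₁, c₂, τ, hc₁, hc₂, hsum, hprod, hτ⟩ :
      ∃ c₁ c₂ τ : ℝ, 0 < c₁ ∧ 0 < c₂ ∧ c₁ + c₂ = a ∧ c₁*c₂ + τ^2 = Ω^2 ∧ τ*(c₁-c₂) = 0 := by
    rcases le_or_gt (a^2) (4*Ω^2) with h | h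
    · refine ⟨a/2, a/2, Real.sqrt (4*Ω^2-a^2)/2, by positivity, by positivity, by ring, ?_, by ring⟩
      rw [div_pow, Real.sq_sqrt (by linarith)]
      ring
    · have hs2 : Real.sqrt (a^2-4*Ω^2) ^ 2 = a^2-4*Ω^2 := Real.sq_sqrt (by linarith)
      have hslt : Real.sqrt (a^2-4*Ω^2) < a := (Real.sqrt_lt' ha).mpr (by nlinarith)
      have hsnn : 0 ≤ Real.sqrt (a^2-4*Ω^2) := Real.sqrt_nonneg _
      refine ⟨(a - Real.sqrt (a^2-4*Ω^2))/2, (a + Real.sqrt (a^2-4*Ω^2))/2, 0,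
        by linarith, by linarith, by ring, ?_, by ring⟩
      linear_combination (-(1:ℝ)/4) * hs2
  -- denominator factorization
  have hD : ∀ ω : ℝ, ((ω-τ)^2+c₁^2)*((ω+τ)^2+c₂^2) = (Ω^2-ω^2)^2 + a^2*ω^2 := by
    intro ω
    subst hsum
    rcases mul_eq_zero.mp hτ with h0 | h0
    · subst h0
      linear_combination (c₁*c₂ + Ω^2 - 2*ω^2) * hprod
    · have hcc : c₁ = c₂ := by linarith [sub_eq_zero.mp h0]
      subst hcc
      linear_combination (c₁^2 + τ^2 + Ω^2 - 2*ω^2) * hprod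
  set g : ℝ → ℝ := fun ω : ℝ => (1 / 2) * Real.log
      ((Ω ^ 2 - ω ^ 2) ^ 2 / ((Ω ^ 2 - ω ^ 2) ^ 2 + a ^ 2 * ω ^ 2)) with hg
  set F : ℝ → ℝ := fun ω : ℝ =>
      (ω-Ω)*Real.log (ω-Ω) + (ω+Ω)*Real.log (ω+Ω)
      - ((1/2)*(ω-τ)*Real.log ((ω-τ)^2+c₁^2) + c₁ * Real.arctan ((ω-τ)/c₁))
      - ((1/2)*(ω+τ)*Real.log ((ω+τ)^2+c₂^2) + c₂ * Real.arctan ((ω+τ)/c₂)) with hF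
  have hF' : ∀ ω : ℝ, 0 < ω → ω ≠ Ω → HasDerivAt F (g ω) ω := by
    intro ω hω hne
    exact bode_deriv a Ω τ c₁ c₂ hΩ hc₁ hc₂ hD ω hω hne
  -- continuity of F
  have hFcont : Continuous F := by
    have hs1 : Continuous (fun ω : ℝ => ω - Ω) := by continuity
    have hs2 : Continuous (fun ω : ℝ => ω + Ω) := by continuity
    have h1 : Continuous (fun ω : ℝ => (ω-Ω)*Real.log (ω-Ω)) := by
      simpa [Function.comp_def] using Real.continuous_mul_log.comp hs1
    have h2 : Continuous (fun ω : ℝ => (ω+Ω)*Real.log (ω+Ω)) := by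
      simpa [Function.comp_def] using Real.continuous_mul_log.comp hs2
    have h3 : Continuous (fun ω : ℝ => Real.log ((ω-τ)^2+c₁^2)) := by
      apply Continuous.log
      · continuity
      · intro x; positivity
    have h4 : Continuous (fun ω : ℝ => Real.log ((ω+τ)^2+c₂^2)) := by
      apply Continuous.log
      · continuity
      · intro x; positivity
    apply Continuous.sub
    apply Continuous.sub
    · exact h1.add h2
    · exact ((continuous_const.mul (continuous_id.sub continuous_const)).mul h3).add
        (continuous_const.mul (Real.continuous_arctan.comp
          ((continuous_id.sub continuous_const).div_const c₁)))
    · exact ((continuous_const.mul (continuous_id.add continuous_const)).mul h4).add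
        (continuous_const.mul (Real.continuous_arctan.comp
          ((continuous_id.add continuous_const).div_const c₂)))
  -- F 0 = 0
  have hF0 : F 0 = 0 := by
    have e1 : ((0:ℝ)-Ω)*Real.log (0-Ω) + ((0:ℝ)+Ω)*Real.log (0+Ω) = 0 := by
      rw [show ((0:ℝ)-Ω) = -Ω by ring, show ((0:ℝ)+Ω) = Ω by ring, Real.log_neg_eq_log]
      ring
    rcases mul_eq_zero.mp hτ with h0 | h0
    · simp only [hF, h0]
      rw [show ((0:ℝ)-Ω) = -Ω by ring, show ((0:ℝ)+Ω) = Ω by ring, Real.log_neg_eq_log]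
      norm_num
    · have hcc : c₁ = c₂ := by linarith [sub_eq_zero.mp h0]
      simp only [hF, hcc]
      rw [show ((0:ℝ)-Ω) = -Ω by ring, show ((0:ℝ)+Ω) = Ω by ring, Real.log_neg_eq_log,
        show ((0:ℝ)-τ) = -τ by ring, show ((0:ℝ)+τ) = τ by ring,
        show ((-τ)^2 : ℝ) = τ^2 by ring, neg_div, Real.arctan_neg]
      ring
  -- limit of F at infinity
  have hFlim : Tendsto F atTop (𝓝 (-(Real.pi * a / 2))) := by
    have hC1 := bode_aux_C (-Ω) 0
    have hC2 := bode_aux_C Ω 0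
    have hC3 := bode_aux_C (-τ) c₁
    have hC4 := bode_aux_C τ c₂
    have hB1 := bode_aux_B (-τ) c₁ hc₁
    have hB2 := bode_aux_B τ c₂ hc₂
    have h := ((((hC1.add hC2).sub hC3).sub hC4).sub (hB1.const_mul c₁)).sub
      (hB2.const_mul c₂)
    have hval : (-Ω + Ω - -τ - τ) - c₁ * (Real.pi/2) - c₂ * (Real.pi/2)
        = -(Real.pi * a / 2) := by
      rw [← hsum]; ring
    rw [hval] at h
    apply h.congr
    intro ω
    have e1 : Real.log ((ω - Ω)^2 + 0^2) = 2 * Real.log (ω - Ω) := by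
      rw [show ((ω - Ω)^2 + 0^2 : ℝ) = (ω-Ω)^2 by ring]
      rw [Real.log_pow]; push_cast; ring
    have e2 : Real.log ((ω + Ω)^2 + 0^2) = 2 * Real.log (ω + Ω) := by
      rw [show ((ω + Ω)^2 + 0^2 : ℝ) = (ω+Ω)^2 by ring]
      rw [Real.log_pow]; push_cast; ring
    simp only [hF, ← sub_eq_add_neg]
    rw [e1, e2]
    ring
  -- nonpositivity of g
  have hDpos : ∀ ω : ℝ, (0:ℝ) < (Ω^2-ω^2)^2 + a^2*ω^2 := by
    intro ω; rw [← hD ω]; positivity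
  have hgle : ∀ ω : ℝ, g ω ≤ 0 := by
    intro ω
    apply mul_nonpos_of_nonneg_of_nonpos (by norm_num)
    apply Real.log_nonpos
    · positivity
    · rw [div_le_one (hDpos ω)]
      nlinarith [sq_nonneg (a*ω)]
  -- interval integrability on [0, Ω] and [Ω, Ω+1]
  have hmem : ∀ x ∈ Ioo (0:ℝ) Ω, HasDerivAt (fun ω => -F ω) (-(g x)) x := by
    intro x hx
    exact (hF' x hx.1 (ne_of_lt hx.2)).neg
  have int1 : IntervalIntegrable g volume 0 Ω := by
    have h := intervalIntegral.intervalIntegrable_deriv_of_nonneg (g := fun ω => -F ω) (g' := fun ω => -g ω)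
      (hFcont.neg.continuousOn)
      (by
        intro x hx
        rw [min_eq_left hΩ.le, max_eq_right hΩ.le] at hx
        exact (hF' x hx.1 (ne_of_lt hx.2)).neg)
      (by
        intro x hx
        simpa using hgle x)
    have h2 := h.neg
    have he : (-fun ω => -g ω) = g := by funext ω; simp
    rwa [he] at h2
  have int2 : IntervalIntegrable g volume Ω (Ω+1) := by
    have hle : Ω ≤ Ω + 1 := by linarith
    have h := intervalIntegral.intervalIntegrable_deriv_of_nonneg (g := fun ω => -F ω) (g' := fun ω => -g ω)
      (hFcont.neg.continuousOn)
      (by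
        intro x hx
        rw [min_eq_left hle, max_eq_right hle] at hx
        exact (hF' x (by linarith [hx.1]) (ne_of_gt hx.1)).neg)
      (by
        intro x hx
        simpa using hgle x)
    have h2 := h.neg
    have he : (-fun ω => -g ω) = g := by funext ω; simp
    rwa [he] at h2
  have val1 : ∫ x in (0:ℝ)..Ω, g x = F Ω - F 0 :=
    intervalIntegral.integral_eq_sub_of_hasDeriv_right_of_le hΩ.le
      hFcont.continuousOn
      (fun x hx => (hF' x hx.1 (ne_of_lt hx.2)).hasDerivWithinAt)
      int1
  have val2 : ∫ x in Ω..(Ω+1), g x = F (Ω+1) - F Ω :=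
    intervalIntegral.integral_eq_sub_of_hasDeriv_right_of_le (by linarith)
      hFcont.continuousOn
      (fun x hx => (hF' x (by linarith [hx.1]) (ne_of_gt hx.1)).hasDerivWithinAt)
      int2
  -- tail
  have tailderiv : ∀ x ∈ Ioi (Ω+1), HasDerivAt F (g x) x := by
    intro x hx
    have hx' : Ω + 1 < x := hx
    exact hF' x (by linarith) (by intro h; linarith [h ▸ hx'])
  have tail_int : IntegrableOn g (Ioi (Ω+1)) := by
    have h := integrableOn_Ioi_deriv_of_nonneg (g := fun ω => -F ω) (g' := fun ω => -g ω)
      (hFcont.neg.continuousWithinAt)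
      (fun x hx => (tailderiv x hx).neg)
      (fun x hx => by simpa using hgle x)
      (hFlim.neg)
    exact integrable_neg_iff.mp h
  have tail_val : ∫ x in Ioi (Ω+1), g x = (-(Real.pi * a / 2)) - F (Ω+1) :=
    integral_Ioi_of_hasDerivAt_of_tendsto hFcont.continuousWithinAt tailderiv tail_int hFlim
  -- assemble integrability
  have i1 : IntegrableOn g (Ioc 0 Ω) :=
    (intervalIntegrable_iff_integrableOn_Ioc_of_le hΩ.le).mp int1
  have i2 : IntegrableOn g (Ioc Ω (Ω+1)) :=
    (intervalIntegrable_iff_integrableOn_Ioc_of_le (by linarith)).mp int2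
  have imid : IntegrableOn g (Ioc 0 (Ω+1)) := by
    have := i1.union i2
    rwa [Set.Ioc_union_Ioc_eq_Ioc hΩ.le (by linarith)] at this
  have hsplit : Ioc (0:ℝ) (Ω+1) ∪ Ioi (Ω+1) = Ioi 0 :=
    Set.Ioc_union_Ioi_eq_Ioi (by linarith)
  have ifull : IntegrableOn g (Ioi 0) := by
    have := imid.union tail_int
    rwa [hsplit] at this
  refine ⟨ifull, ?_⟩
  -- assemble value
  have hval : ∫ ω in Ioi (0:ℝ), g ω
      = (∫ ω in Ioc (0:ℝ) (Ω+1), g ω) + ∫ ω in Ioi (Ω+1), g ω := by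
    rw [← hsplit]
    exact setIntegral_union (Set.Ioc_disjoint_Ioi le_rfl) measurableSet_Ioi imid tail_int
  have hmid : ∫ ω in Ioc (0:ℝ) (Ω+1), g ω = (F Ω - F 0) + (F (Ω+1) - F Ω) := by
    rw [← intervalIntegral.integral_of_le (by linarith : (0:ℝ) ≤ Ω+1)]
    rw [← intervalIntegral.integral_add_adjacent_intervals int1 int2]
    rw [val1, val2]
  calc ∫ ω in Ioi (0:ℝ), g ω
      = (F Ω - F 0) + (F (Ω+1) - F Ω) + ((-(Real.pi * a / 2)) - F (Ω+1)) := by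
        rw [hval, hmid, tail_val]
    _ = -(Real.pi * a / 2) := by rw [hF0]; ring
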